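/- For G = ES_1(p,n), the endomorphism semigroup induces a partial order on the automorphism orbits: for all x, y ∈ G, if there exist endomorphisms σ, τ of G with σ(x) = y and τ(y) = x, then there exists an automorphism of G mapping x to y. Moreover the resulting order on orbits is the total order {e} < Z(G)∖{e} < G∖Z(G). -/

import Mathlib

open Matrix

/-- The Heisenberg group `ES₁(p,n)`: carrier `𝔽_p^n × 𝔽_p^n × 𝔽_p`. -/
@[ext]
structure ES1 (p n : ℕ) : Type where
  u : Fin n → ZMod p
  w : Fin n → ZMod p
  z : ZMod p

namespace ES1

variable {p n : ℕ}

instance : Mul (ES1 p n) :=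
  ⟨fun x y => ⟨x.u + y.u, x.w + y.w, x.z + y.z + x.u ⬝ᵥ y.w⟩⟩

@[simp] theorem mul_u (x y : ES1 p n) : (x * y).u = x.u + y.u := rfl
@[simp] theorem mul_w (x y : ES1 p n) : (x * y).w = x.w + y.w := rfl
@[simp] theorem mul_z (x y : ES1 p n) : (x * y).z = x.z + y.z + x.u ⬝ᵥ y.w := rfl

instance : One (ES1 p n) := ⟨⟨0, 0, 0⟩⟩

@[simp] theorem one_u : (1 : ES1 p n).u = 0 := rfl
@[simp] theorem one_w : (1 : ES1 p n).w = 0 := rfl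
@[simp] theorem one_z : (1 : ES1 p n).z = 0 := rfl

instance : Inv (ES1 p n) :=
  ⟨fun x => ⟨-x.u, -x.w, -x.z + x.u ⬝ᵥ x.w⟩⟩

@[simp] theorem inv_u (x : ES1 p n) : (x⁻¹).u = -x.u := rfl
@[simp] theorem inv_w (x : ES1 p n) : (x⁻¹).w = -x.w := rfl
@[simp] theorem inv_z (x : ES1 p n) : (x⁻¹).z = -x.z + x.u ⬝ᵥ x.w := rfl

instance : Group (ES1 p n) :=
  Group.ofLeftAxioms
    (fun a b c => by
      ext <;> simp [add_dotProduct, dotProduct_add] <;> ring)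
    (fun a => by ext <;> simp)
    (fun a => by ext <;> simp [neg_dotProduct] <;> ring)

/-! ### auxiliary -/

variable [Fact p.Prime]

theorem mem_center_iff (x : ES1 p n) :
    x ∈ Subgroup.center (ES1 p n) ↔ x.u = 0 ∧ x.w = 0 := by
  rw [Subgroup.mem_center_iff]
  constructor
  · intro h
    constructor
    · funext i
      have := congrArg ES1.z (h ⟨0, Pi.single i 1, 0⟩)
      simpa [dotProduct_single, single_dotProduct] using this
    · funext i
      have := congrArg ES1.z (h ⟨Pi.single i 1, 0, 0⟩)
      simpa [dotProduct_single, single_dotProduct] using this.symm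
  · rintro ⟨h1, h2⟩ g
    ext <;> simp [h1, h2] <;> ring

/-- the scaling automorphism -/
def scaleE (c : ZMod p) (hc : c ≠ 0) : ES1 p n ≃* ES1 p n where
  toFun g := ⟨c • g.u, g.w, c * g.z⟩
  invFun g := ⟨c⁻¹ • g.u, g.w, c⁻¹ * g.z⟩
  left_inv g := by ext <;> simp [inv_mul_cancel_left₀ hc]
  right_inv g := by ext <;> simp [mul_inv_cancel_left₀ hc]
  map_mul' a b := by ext <;> simp [smul_add, smul_dotProduct] <;> ring

/-- swap automorphism -/
def JE : ES1 p n ≃* ES1 p n where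
  toFun g := ⟨g.w, -g.u, g.z - g.u ⬝ᵥ g.w⟩
  invFun g := ⟨-g.w, g.u, g.z - g.w ⬝ᵥ g.u⟩
  left_inv g := by ext <;> simp [neg_dotProduct, dotProduct_comm] <;> ring
  right_inv g := by ext <;> simp [dotProduct_neg, dotProduct_comm] <;> ring
  map_mul' a b := by
    ext <;> simp [add_dotProduct, dotProduct_add, dotProduct_neg, neg_dotProduct,
      dotProduct_comm a.w b.u] <;> ring

/-- central-shift automorphism -/
def DE (v : Fin n → ZMod p) : ES1 p n ≃* ES1 p n where
  toFun g := ⟨g.u, g.w, g.z + v ⬝ᵥ g.u⟩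
  invFun g := ⟨g.u, g.w, g.z - v ⬝ᵥ g.u⟩
  left_inv g := by ext <;> simp
  right_inv g := by ext <;> simp
  map_mul' a b := by ext <;> simp [dotProduct_add] <;> ring

/-- transvection automorphism acting on `w` -/
def TE (hp2 : (2 : ZMod p) ≠ 0) (S : (Fin n → ZMod p) → (Fin n → ZMod p))
    (hadd : ∀ a b, S (a + b) = S a + S b)
    (hsym : ∀ a b, a ⬝ᵥ S b = b ⬝ᵥ S a) : ES1 p n ≃* ES1 p n where
  toFun g := ⟨g.u, g.w + S g.u, g.z + (2 : ZMod p)⁻¹ * (g.u ⬝ᵥ S g.u)⟩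
  invFun g := ⟨g.u, g.w - S g.u, g.z - (2 : ZMod p)⁻¹ * (g.u ⬝ᵥ S g.u)⟩
  left_inv g := by ext <;> simp
  right_inv g := by ext <;> simp
  map_mul' a b := by
    have h2 : (2 : ZMod p)⁻¹ * 2 = 1 := inv_mul_cancel₀ hp2
    ext <;> simp [hadd, dotProduct_add, add_dotProduct, hsym b.u a.u]
    · ring
    · linear_combination (a.u ⬝ᵥ S b.u) * h2
    
/-- transvection automorphism acting on `u` -/
def UE (hp2 : (2 : ZMod p) ≠ 0) (S : (Fin n → ZMod p) → (Fin n → ZMod p))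
    (hadd : ∀ a b, S (a + b) = S a + S b)
    (hsym : ∀ a b, a ⬝ᵥ S b = b ⬝ᵥ S a) : ES1 p n ≃* ES1 p n where
  toFun g := ⟨g.u + S g.w, g.w, g.z + (2 : ZMod p)⁻¹ * (g.w ⬝ᵥ S g.w)⟩
  invFun g := ⟨g.u - S g.w, g.w, g.z - (2 : ZMod p)⁻¹ * (g.w ⬝ᵥ S g.w)⟩
  left_inv g := by ext <;> simp
  right_inv g := by ext <;> simp
  map_mul' a b := by
    have h2 : (2 : ZMod p)⁻¹ * 2 = 1 := inv_mul_cancel₀ hp2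
    ext <;> simp [hadd, dotProduct_add, add_dotProduct]
    · ring
    · rw [hsym a.w b.w, dotProduct_comm (S a.w) b.w]
      linear_combination (b.w ⬝ᵥ S a.w) * h2

/-- a symmetric additive map sending `a` to `b`, given `a i ≠ 0`. -/
def Smap (a b : Fin n → ZMod p) (i : Fin n) : (Fin n → ZMod p) → (Fin n → ZMod p) :=
  fun y => ((a i)⁻¹ * y i) • b +
    ((a i)⁻¹ * (b ⬝ᵥ y) - (a ⬝ᵥ b) * ((a i)⁻¹)^2 * y i) • (Pi.single i 1 : Fin n → ZMod p)

theorem Smap_add (a b : Fin n → ZMod p) (i : Fin n) (x y : Fin n → ZMod p) :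
    Smap a b i (x + y) = Smap a b i x + Smap a b i y := by
  funext j
  simp [Smap, dotProduct_add]
  ring

theorem dot_Smap (a b : Fin n → ZMod p) (i : Fin n) (x y : Fin n → ZMod p) :
    x ⬝ᵥ Smap a b i y = (a i)⁻¹ * (y i * (x ⬝ᵥ b) + (b ⬝ᵥ y) * x i)
      - (a ⬝ᵥ b) * ((a i)⁻¹)^2 * y i * x i := by
  simp [Smap, dotProduct_add, dotProduct_smul, dotProduct_single]
  ring

theorem Smap_sym (a b : Fin n → ZMod p) (i : Fin n) (x y : Fin n → ZMod p) :
    x ⬝ᵥ Smap a b i y = y ⬝ᵥ Smap a b i x := by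
  rw [dot_Smap, dot_Smap, dotProduct_comm b x, dotProduct_comm b y]
  ring

theorem Smap_apply_self (a b : Fin n → ZMod p) (i : Fin n) (hi : a i ≠ 0) :
    Smap a b i a = b := by
  funext j
  simp only [Smap, Pi.add_apply, Pi.smul_apply, smul_eq_mul, dotProduct_comm b a]
  field_simp
  ring

/-- power formula -/
theorem pow_formula (y : ES1 p n) (k : ℕ) :
    y ^ k = ⟨(k : ZMod p) • y.u, (k : ZMod p) • y.w,
      (k : ZMod p) * y.z + (k.choose 2 : ZMod p) * (y.u ⬝ᵥ y.w)⟩ := by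
  induction k with
  | zero => ext <;> simp
  | succ k ih =>
    rw [pow_succ, ih]
    ext <;> push_cast [Nat.choose_succ_succ, Nat.choose_one_right] <;>
      simp [add_smul, smul_dotProduct] <;> ring

theorem pow_p (hodd : Odd p) (y : ES1 p n) : y ^ p = 1 := by
  obtain ⟨m, hm⟩ := hodd
  have hdvd : p ∣ p.choose 2 := by
    have h1 : p - 1 = 2 * m := by omega
    have : p.choose 2 = p * m := by
      rw [Nat.choose_two_right, h1, Nat.mul_div_assoc _ ⟨m, rfl⟩,
        Nat.mul_div_cancel_left m (by norm_num)]
    exact ⟨m, this⟩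
  have hc : ((p.choose 2 : ℕ) : ZMod p) = 0 :=
    (ZMod.natCast_eq_zero_iff _ _).mpr hdvd
  rw [pow_formula]
  ext <;> simp [hc, ZMod.natCast_self]

theorem pow_val_add (hodd : Odd p) (y : ES1 p n) (j k : ZMod p) :
    y ^ (j + k).val = y ^ j.val * y ^ k.val := by
  haveI : NeZero p := ⟨(Fact.out : p.Prime).ne_zero⟩
  rw [← pow_add, ← Nat.div_add_mod (j.val + k.val) p, pow_add, pow_mul,
    pow_p hodd, one_pow, one_mul, ZMod.val_add]

/-- endomorphism `g ↦ y ^ (r ⬝ᵥ g.u + s ⬝ᵥ g.w)` -/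
def toY (hodd : Odd p) (y : ES1 p n) (r s : Fin n → ZMod p) : ES1 p n →* ES1 p n where
  toFun g := y ^ (r ⬝ᵥ g.u + s ⬝ᵥ g.w).val
  map_one' := by simp
  map_mul' a b := by
    have : r ⬝ᵥ (a * b).u + s ⬝ᵥ (a * b).w
        = (r ⬝ᵥ a.u + s ⬝ᵥ a.w) + (r ⬝ᵥ b.u + s ⬝ᵥ b.w) := by
      simp [dotProduct_add]; ring
    simp only [this, pow_val_add hodd]

/-- any noncentral element maps to anything by an endomorphism. -/
theorem noncentral_to_any (hodd : Odd p) (x : ES1 p n)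
    (hx : x ∉ Subgroup.center (ES1 p n)) (y : ES1 p n) :
    ∃ σ : ES1 p n →* ES1 p n, σ x = y := by
  have hval1 : ((1 : ZMod p)).val = 1 := ZMod.val_one_eq_one_mod p ▸
    Nat.mod_eq_of_lt (Fact.out : p.Prime).one_lt
  rw [mem_center_iff, not_and_or] at hx
  rcases hx with hx | hx
  · obtain ⟨i, hi⟩ : ∃ i, x.u i ≠ 0 := by
      by_contra h; push_neg at h; exact hx (funext h)
    refine ⟨toY hodd y ((x.u i)⁻¹ • (Pi.single i 1 : Fin n → ZMod p)) 0, ?_⟩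
    have : ((x.u i)⁻¹ • (Pi.single i 1 : Fin n → ZMod p)) ⬝ᵥ x.u
        + (0 : Fin n → ZMod p) ⬝ᵥ x.w = 1 := by
      simp [smul_dotProduct, single_dotProduct, inv_mul_cancel₀ hi]
    simp only [toY, MonoidHom.coe_mk, OneHom.coe_mk, this, hval1, pow_one]
  · obtain ⟨i, hi⟩ : ∃ i, x.w i ≠ 0 := by
      by_contra h; push_neg at h; exact hx (funext h)
    refine ⟨toY hodd y 0 ((x.w i)⁻¹ • (Pi.single i 1 : Fin n → ZMod p)), ?_⟩
    have : (0 : Fin n → ZMod p) ⬝ᵥ x.u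
        + ((x.w i)⁻¹ • (Pi.single i 1 : Fin n → ZMod p)) ⬝ᵥ x.w = 1 := by
      simp [smul_dotProduct, single_dotProduct, inv_mul_cancel₀ hi]
    simp only [toY, MonoidHom.coe_mk, OneHom.coe_mk, this, hval1, pow_one]

@[simp] theorem TE_apply (hp2 : (2:ZMod p) ≠ 0) (S) (h1) (h2) (g : ES1 p n) :
    TE hp2 S h1 h2 g = ⟨g.u, g.w + S g.u, g.z + (2:ZMod p)⁻¹ * (g.u ⬝ᵥ S g.u)⟩ := rfl

@[simp] theorem UE_apply (hp2 : (2:ZMod p) ≠ 0) (S) (h1) (h2) (g : ES1 p n) :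
    UE hp2 S h1 h2 g = ⟨g.u + S g.w, g.w, g.z + (2:ZMod p)⁻¹ * (g.w ⬝ᵥ S g.w)⟩ := rfl

@[simp] theorem JE_apply (g : ES1 p n) :
    (JE : ES1 p n ≃* ES1 p n) g = ⟨g.w, -g.u, g.z - g.u ⬝ᵥ g.w⟩ := rfl

@[simp] theorem DE_apply (v : Fin n → ZMod p) (g : ES1 p n) :
    DE v g = ⟨g.u, g.w, g.z + v ⬝ᵥ g.u⟩ := rfl

@[simp] theorem scaleE_apply (c : ZMod p) (hc : c ≠ 0) (g : ES1 p n) :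
    scaleE c hc g = ⟨c • g.u, g.w, c * g.z⟩ := rfl

/-- Step 1: if the `u`-part is nonzero, we can kill the `w` and `z` parts. -/
theorem to_u_only (hp2 : (2:ZMod p) ≠ 0) (x : ES1 p n) (hu : x.u ≠ 0) :
    ∃ e : ES1 p n ≃* ES1 p n, e x = ⟨x.u, 0, 0⟩ := by
  obtain ⟨i, hi⟩ : ∃ i, x.u i ≠ 0 := by
    by_contra h; push_neg at h; exact hu (funext h)
  set S := Smap x.u (-x.w) i with hS
  set e₁ := TE hp2 S (Smap_add _ _ _) (Smap_sym _ _ _) with he₁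
  have h1 : e₁ x = ⟨x.u, 0, x.z + (2:ZMod p)⁻¹ * (x.u ⬝ᵥ S x.u)⟩ := by
    rw [he₁, TE_apply, hS, Smap_apply_self _ _ _ hi]
    ext <;> simp
  set z' := x.z + (2:ZMod p)⁻¹ * (x.u ⬝ᵥ S x.u) with hz'
  set v := (-z' * (x.u i)⁻¹) • (Pi.single i 1 : Fin n → ZMod p) with hv
  refine ⟨e₁.trans (DE v), ?_⟩
  have hvx : v ⬝ᵥ x.u = -z' := by
    rw [hv, smul_dotProduct, single_dotProduct, one_mul, smul_eq_mul, mul_assoc,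
      inv_mul_cancel₀ hi, mul_one]
  simp only [MulEquiv.trans_apply, h1, DE_apply, hvx]
  ext <;> simp

/-- Step 2: move between any two nonzero `u`-parts. -/
theorem std_to_std (hp2 : (2:ZMod p) ≠ 0) (a b : Fin n → ZMod p)
    (ha : a ≠ 0) (hb : b ≠ 0) :
    ∃ e : ES1 p n ≃* ES1 p n, e ⟨a, 0, 0⟩ = ⟨b, 0, 0⟩ := by
  obtain ⟨i, hi⟩ : ∃ i, a i ≠ 0 := by
    by_contra h; push_neg at h; exact ha (funext h)
  set S := Smap a b i with hS
  set e₁ := TE hp2 S (Smap_add _ _ _) (Smap_sym _ _ _) with he₁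
  set x₁ : ES1 p n := ⟨a, b, (2:ZMod p)⁻¹ * (a ⬝ᵥ b)⟩ with hx₁
  have h1 : e₁ ⟨a, 0, 0⟩ = x₁ := by
    rw [he₁, TE_apply, hS, Smap_apply_self _ _ _ hi]
    ext <;> simp [hx₁]
  set x₂ : ES1 p n := ⟨b, -a, (2:ZMod p)⁻¹ * (a ⬝ᵥ b) - a ⬝ᵥ b⟩ with hx₂
  have h2 : JE x₁ = x₂ := rfl
  obtain ⟨e₃, h3⟩ := to_u_only hp2 x₂ (by simpa [hx₂] using hb)
  exact ⟨(e₁.trans JE).trans e₃, by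
    simp only [MulEquiv.trans_apply, h1, h2, h3]; rfl⟩

/-- every noncentral element can be mapped to the standard element by an automorphism -/
theorem reach (hp2 : (2:ZMod p) ≠ 0) (hn : 0 < n) (x : ES1 p n)
    (hx : x ∉ Subgroup.center (ES1 p n)) :
    ∃ e : ES1 p n ≃* ES1 p n,
      e x = ⟨(Pi.single (⟨0, hn⟩ : Fin n) 1 : Fin n → ZMod p), 0, 0⟩ := by
  have hone : (Pi.single (⟨0, hn⟩ : Fin n) 1 : Fin n → ZMod p) ≠ 0 := by
    intro h
    have := congrFun h ⟨0, hn⟩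
    simpa [Pi.single_eq_same] using this
  rw [mem_center_iff, not_and_or] at hx
  by_cases hu : x.u ≠ 0
  · obtain ⟨e₁, h1⟩ := to_u_only hp2 x hu
    obtain ⟨e₂, h2⟩ := std_to_std hp2 x.u _ hu hone
    exact ⟨e₁.trans e₂, by simp only [MulEquiv.trans_apply, h1, h2]⟩
  · push_neg at hu
    have hw : x.w ≠ 0 := by
      rcases hx with h | h
      · exact absurd hu h
      · exact h
    set x₁ : ES1 p n := ⟨x.w, -x.u, x.z - x.u ⬝ᵥ x.w⟩ with hx₁
    have h0 : JE x = x₁ := rfl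
    obtain ⟨e₁, h1⟩ := to_u_only hp2 x₁ (by simpa [hx₁] using hw)
    obtain ⟨e₂, h2⟩ := std_to_std hp2 x₁.u _ (by simpa [hx₁] using hw) hone
    exact ⟨(JE.trans e₁).trans e₂, by simp only [MulEquiv.trans_apply, h0, h1, h2]⟩

/-- commutators are central -/
theorem commutator_central (g h : ES1 p n) :
    g * h * g⁻¹ * h⁻¹ ∈ Subgroup.center (ES1 p n) := by
  rw [mem_center_iff]
  constructor <;> simp only [mul_u, mul_w, inv_u, inv_w] <;> abel

/-- central elements are commutators (n > 0) -/
theorem central_is_commutator (hn : 0 < n) (x : ES1 p n)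
    (hx : x ∈ Subgroup.center (ES1 p n)) :
    ∃ a b : ES1 p n, a * b * a⁻¹ * b⁻¹ = x := by
  obtain ⟨hu, hw⟩ := (mem_center_iff x).mp hx
  set e : Fin n → ZMod p := Pi.single (⟨0, hn⟩ : Fin n) 1 with he
  refine ⟨⟨e, 0, 0⟩, ⟨0, x.z • e, 0⟩, ?_⟩
  ext <;> simp [hu, hw, he, dotProduct_smul, single_dotProduct, Pi.single_eq_same]

/-- scaling endomorphism for arbitrary `c` -/
def scaleHom (c : ZMod p) : ES1 p n →* ES1 p n where
  toFun g := ⟨c • g.u, g.w, c * g.z⟩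
  map_one' := by ext <;> simp
  map_mul' a b := by ext <;> simp [smul_add, smul_dotProduct] <;> ring

@[simp] theorem scaleHom_apply (c : ZMod p) (g : ES1 p n) :
    scaleHom c g = ⟨c • g.u, g.w, c * g.z⟩ := rfl

end ES1


theorem ES1_endomorphisms_induce_partial_order (p n : ℕ) [Fact p.Prime] (hodd : Odd p)
    (hn : 0 < n) :
    (∀ x y : ES1 p n, (∃ σ : ES1 p n →* ES1 p n, σ x = y) →
      (∃ τ : ES1 p n →* ES1 p n, τ y = x) → ∃ e : ES1 p n ≃* ES1 p n, e x = y) ∧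
    (∀ x : ES1 p n, x ∉ Subgroup.center (ES1 p n) →
      ∀ y : ES1 p n, ∃ σ : ES1 p n →* ES1 p n, σ x = y) ∧
    (∀ x ∈ Subgroup.center (ES1 p n), x ≠ 1 →
      ∀ y ∈ Subgroup.center (ES1 p n), ∃ σ : ES1 p n →* ES1 p n, σ x = y) ∧
    (∀ x ∈ Subgroup.center (ES1 p n), ∀ y : ES1 p n,
      (∃ σ : ES1 p n →* ES1 p n, σ x = y) → y ∈ Subgroup.center (ES1 p n)) ∧
    (∀ y : ES1 p n, (∃ σ : ES1 p n →* ES1 p n, σ 1 = y) → y = 1) := by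
  have hp : p.Prime := Fact.out
  have hp2 : (2 : ZMod p) ≠ 0 := by
    intro h
    rw [show (2 : ZMod p) = ((2 : ℕ) : ZMod p) by norm_cast,
      ZMod.natCast_eq_zero_iff] at h
    have h2 := (Nat.prime_dvd_prime_iff_eq hp Nat.prime_two).mp h
    rw [h2] at hodd
    exact (by decide : ¬ Odd 2) hodd
  have part4 : ∀ x ∈ Subgroup.center (ES1 p n), ∀ y : ES1 p n,
      (∃ σ : ES1 p n →* ES1 p n, σ x = y) → y ∈ Subgroup.center (ES1 p n) := by
    rintro x hx y ⟨σ, rfl⟩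
    obtain ⟨a, b, hab⟩ := ES1.central_is_commutator hn x hx
    rw [← hab]
    simp only [_root_.map_mul, map_inv]
    exact ES1.commutator_central _ _
  refine ⟨?_, fun x hx y => ES1.noncentral_to_any hodd x hx y, ?_, part4, ?_⟩
  · rintro x y ⟨σ, hσ⟩ ⟨τ, hτ⟩
    by_cases hx : x ∈ Subgroup.center (ES1 p n)
    · have hy : y ∈ Subgroup.center (ES1 p n) := part4 x hx y ⟨σ, hσ⟩
      by_cases hx1 : x = 1
      · have hy1 : y = 1 := by rw [← hσ, hx1, _root_.map_one]
        exact ⟨MulEquiv.refl _, by rw [MulEquiv.refl_apply, hx1, hy1]⟩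
      · have hy1 : y ≠ 1 := by
          intro h
          exact hx1 (by rw [← hτ, h, _root_.map_one])
        obtain ⟨hu, hw⟩ := (ES1.mem_center_iff x).mp hx
        obtain ⟨hu', hw'⟩ := (ES1.mem_center_iff y).mp hy
        have hxz : x.z ≠ 0 := fun h => hx1 (by ext <;> simp [hu, hw, h])
        have hyz : y.z ≠ 0 := fun h => hy1 (by ext <;> simp [hu', hw', h])
        have hc : y.z * x.z⁻¹ ≠ 0 := mul_ne_zero hyz (inv_ne_zero hxz)
        refine ⟨ES1.scaleE _ hc, ?_⟩
        ext <;> simp [hu, hw, hu', hw', mul_assoc, inv_mul_cancel₀ hxz]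
    · have hy : y ∉ Subgroup.center (ES1 p n) := by
        intro hy
        exact hx (part4 y hy x ⟨τ, hτ⟩)
      obtain ⟨ex, hex⟩ := ES1.reach hp2 hn x hx
      obtain ⟨ey, hey⟩ := ES1.reach hp2 hn y hy
      refine ⟨ex.trans ey.symm, ?_⟩
      rw [MulEquiv.trans_apply, hex]
      exact (MulEquiv.symm_apply_eq ey).mpr hey.symm
  · rintro x hx hx1 y hy
    obtain ⟨hu, hw⟩ := (ES1.mem_center_iff x).mp hx
    obtain ⟨hu', hw'⟩ := (ES1.mem_center_iff y).mp hy
    have hxz : x.z ≠ 0 := fun h => hx1 (by ext <;> simp [hu, hw, h])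
    refine ⟨ES1.scaleHom (y.z * x.z⁻¹), ?_⟩
    ext <;> simp [hu, hw, hu', hw', mul_assoc, inv_mul_cancel₀ hxz]
  · rintro y ⟨σ, hσ⟩
    rw [← hσ, _root_.map_one]
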